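/- arXiv:2501.03359 — 2 statements merged into one kernel-verified Lean document; each statement's English description precedes it below -/
import Mathlib

section
/- For every integer d ≥ 2 and real α > 0, the infinite cluster 𝒳_∞ is almost surely a bounded subset of ℝ^d; equivalently, ρ(𝒳_∞) < ∞ almost surely, and hence the convex hull of 𝒳_∞ is almost surely bounded. -/
open scoped ENNReal NNReal
/-- Index type for the jointly independent random choices: `inl i` indexes the
uniform parent choice of vertex `i`, `inr (i, k)` indexes the `k`-th coordinate
of the Gaussian displacement `D i`. -/
abbrev Idx (d : ℕ) := ℕ ⊕ (ℕ × Fin d)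

/-- Value type of each random choice. -/
def IdxType (d : ℕ) : Idx d → Type
  | .inl _ => ℕ
  | .inr _ => ℝ

instance instIdxType (d : ℕ) (x : Idx d) : MeasurableSpace (IdxType d x) := by
  cases x with
  | inl _ => exact (inferInstance : MeasurableSpace ℕ)
  | inr _ => exact (inferInstance : MeasurableSpace ℝ)

/-- The random cluster model in `ℝ^d` with standard deviations `σ_i = i^{-α}`:
`X 1 = 0`, and for `i ≥ 2`, `X i = X (pa i) + D i` where the parent `pa i` is
uniform on `{1, …, i-1}` and `D i` has `d` independent centered Gaussian
coordinates of variance `i^{-2α}`, all choices jointly independent.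
`lvl i` is the level of vertex `i` in the recursive tree. -/
structure Model (d : ℕ) (α : ℝ) where
  Ω : Type
  [mΩ : MeasurableSpace Ω]
  μ : MeasureTheory.Measure Ω
  prob : MeasureTheory.IsProbabilityMeasure μ
  pa : ℕ → Ω → ℕ
  D : ℕ → Ω → EuclideanSpace ℝ (Fin d)
  X : ℕ → Ω → EuclideanSpace ℝ (Fin d)
  lvl : ℕ → Ω → ℕ
  meas_pa : ∀ i, Measurable (pa i)
  meas_D : ∀ i, Measurable (D i)
  pa_mem : ∀ i, 2 ≤ i → ∀ ω, 1 ≤ pa i ω ∧ pa i ω < i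
  pa_unif : ∀ i, 2 ≤ i → ∀ j, 1 ≤ j → j < i → μ {ω | pa i ω = j} = (1 : ℝ≥0∞) / (i - 1 : ℕ)
  D_gauss : ∀ i, 2 ≤ i → ∀ k : Fin d,
    MeasureTheory.Measure.map (fun ω => D i ω k) μ
      = ProbabilityTheory.gaussianReal 0 ((i : ℝ≥0) ^ (-(2 * α)))
  indep : ProbabilityTheory.iIndepFun (β := IdxType d) (m := instIdxType d)
    (fun x : Idx d => match x with
      | .inl i => pa i
      | .inr (i, k) => fun ω => D i ω k) μ
  X_one : ∀ ω, X 1 ω = 0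
  X_rec : ∀ i, 2 ≤ i → ∀ ω, X i ω = X (pa i ω) ω + D i ω
  lvl_one : ∀ ω, lvl 1 ω = 0
  lvl_rec : ∀ i, 2 ≤ i → ∀ ω, lvl i ω = lvl (pa i ω) ω + 1


open MeasureTheory ProbabilityTheory Real Filter Bornology

instance modelMeasurableSpace {d : ℕ} {α : ℝ} (M : Model d α) : MeasurableSpace M.Ω := M.mΩ


/-- Deterministic depth function computed from a parent map. -/
def depthAux (p : ℕ → ℕ) : ℕ → ℕ
  | j => if h : 2 ≤ j then depthAux p (min (p j) (j - 1)) + 1 else 0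
  termination_by j => j
  decreasing_by
    have : j - 1 < j := by omega
    exact lt_of_le_of_lt (min_le_right _ _) this

lemma depthAux_of_le {p : ℕ → ℕ} {j : ℕ} (h : j ≤ 1) : depthAux p j = 0 := by
  rw [depthAux]; simp [Nat.not_le.mpr (by omega : j < 2)]

lemma depthAux_of_ge {p : ℕ → ℕ} {j : ℕ} (h : 2 ≤ j) :
    depthAux p j = depthAux p (min (p j) (j - 1)) + 1 := by
  conv_lhs => rw [depthAux]
  simp [h]

lemma depthAux_congr {p q : ℕ → ℕ} : ∀ j, (∀ r, 2 ≤ r → r ≤ j → p r = q r) →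
    depthAux p j = depthAux q j := by
  intro j
  induction j using Nat.strong_induction_on with
  | _ j ih =>
    intro hpq
    by_cases h : 2 ≤ j
    · rw [depthAux_of_ge h, depthAux_of_ge h, hpq j h le_rfl]
      have hlt : min (q j) (j - 1) < j := by
        have : j - 1 < j := by omega
        exact lt_of_le_of_lt (min_le_right _ _) this
      rw [ih _ hlt (fun r h2 hr => hpq r h2 (by omega))]
    · rw [depthAux_of_le (by omega), depthAux_of_le (by omega)]

/-- Function depending on finitely many ℕ-coordinates is measurable. -/
lemma measurable_depthAux_comp {Ω : Type*} [MeasurableSpace Ω] (j : ℕ)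
    (p : ℕ → Ω → ℕ) (hp : ∀ r, Measurable (p r)) :
    Measurable (fun ω => depthAux (fun r => p r ω) j) := by
  have hrw : (fun ω => depthAux (fun r => p r ω) j) =
      (fun v : (Finset.Icc 2 j : Finset ℕ) → ℕ =>
        depthAux (fun r => if h : r ∈ Finset.Icc 2 j then v ⟨r, h⟩ else 0) j) ∘
      (fun ω (r : (Finset.Icc 2 j : Finset ℕ)) => p r ω) := by
    funext ω
    simp only [Function.comp_apply]
    refine (depthAux_congr j (fun r h2 hr => ?_)).symm
    rw [dif_pos (Finset.mem_Icc.mpr ⟨h2, hr⟩)]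
  rw [hrw]
  exact (measurable_of_countable _).comp (measurable_pi_lambda _ fun r => hp r)

/-- Binomial lower bound. -/
lemma pow_add_le_real {a δ : ℝ} (ha : 0 ≤ a) (hδ : 0 ≤ δ) : ∀ s : ℕ,
    a ^ (s + 1) + (s + 1 : ℕ) * a ^ s * δ ≤ (a + δ) ^ (s + 1) := by
  intro s
  induction s with
  | zero => simp
  | succ s ih =>
    have key := mul_le_mul_of_nonneg_right ih (by positivity : (0:ℝ) ≤ a + δ)
    calc a ^ (s + 2) + ((s + 2 : ℕ) : ℝ) * a ^ (s + 1) * δ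
        ≤ (a ^ (s + 1) + ((s + 1 : ℕ) : ℝ) * a ^ s * δ) * (a + δ) := by
          have e1 : a ^ (s + 2) = a ^ s * a * a := by ring
          have e2 : a ^ (s + 1) = a ^ s * a := by ring
          rw [e1, e2]
          push_cast
          nlinarith [pow_nonneg ha s, mul_nonneg (pow_nonneg ha s) (mul_nonneg hδ hδ)]
      _ ≤ (a + δ) ^ (s + 1) * (a + δ) := key
      _ = (a + δ) ^ (s + 2) := by ring

/-- `x^n / n! ≤ exp x`. -/
lemma pow_div_factorial_le_exp {x : ℝ} (hx : 0 ≤ x) (n : ℕ) :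
    x ^ n / n.factorial ≤ Real.exp x := by
  have h := Real.sum_le_exp_of_nonneg hx (n + 1)
  refine le_trans ?_ h
  have : ∀ i ∈ Finset.range (n + 1), (0:ℝ) ≤ x ^ i / i.factorial := by
    intro i _; positivity
  calc x ^ n / n.factorial ≤ ∑ i ∈ Finset.range (n + 1), x ^ i / i.factorial :=
    Finset.single_le_sum this (Finset.self_mem_range_succ n)
    _ = _ := rfl

/-- `∑_{s=1}^n 1/s ≤ 1 + log n`. -/
lemma harmonic_sum_le (n : ℕ) : ∑ s ∈ Finset.Icc 1 n, ((s : ℝ))⁻¹ ≤ 1 + Real.log n := by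
  induction n with
  | zero => simp
  | succ n ih =>
    rw [Finset.sum_Icc_succ_top (by omega : 1 ≤ n + 1)]
    rcases Nat.eq_zero_or_pos n with hn | hn
    · subst hn; norm_num
    · have hn0 : (0:ℝ) < n := by positivity
      have hstep : ((n : ℝ) + 1)⁻¹ ≤ Real.log (n + 1) - Real.log n := by
        have h1 : Real.log ((n : ℝ) / (n + 1)) ≤ (n : ℝ) / (n + 1) - 1 :=
          Real.log_le_sub_one_of_pos (by positivity)
        have h2 : Real.log ((n : ℝ) / (n + 1)) = Real.log n - Real.log (n + 1) :=
          Real.log_div (ne_of_gt hn0) (by positivity)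
        have h3 : (n : ℝ) / (n + 1) - 1 = -(((n:ℝ) + 1)⁻¹) := by field_simp; ring
        rw [h2, h3] at h1
        linarith
      push_cast
      push_cast at ih
      linarith

/-- Harmonic-type bound : `∑_{m=2}^{j-1} 1/(m-1) ≤ 1 + log j`. -/
lemma harmonic_le_log (j : ℕ) (hj : 2 ≤ j) :
    ∑ m ∈ Finset.Icc 2 (j - 1), ((m - 1 : ℕ) : ℝ)⁻¹ ≤ 1 + Real.log j := by
  have hre : ∑ m ∈ Finset.Icc 2 (j - 1), ((m - 1 : ℕ) : ℝ)⁻¹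
      = ∑ s ∈ Finset.Icc 1 (j - 2), ((s : ℕ) : ℝ)⁻¹ := by
    refine Finset.sum_nbij' (fun m => m - 1) (fun s => s + 1) ?_ ?_ ?_ ?_ ?_
    · intro m hm; simp only [Finset.mem_Icc] at *; omega
    · intro s hs; simp only [Finset.mem_Icc] at *; omega
    · intro m hm; simp only [Finset.mem_Icc] at hm; omega
    · intro s hs; simp only [Finset.mem_Icc] at hs; simp
    · intro m hm; rfl
  rw [hre]
  refine le_trans (harmonic_sum_le _) ?_
  have : Real.log (j - 2 : ℕ) ≤ Real.log j := by
    rcases Nat.eq_zero_or_pos (j - 2) with h | h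
    · rw [h]
      simp only [Nat.cast_zero, Real.log_zero]
      exact Real.log_nonneg (by exact_mod_cast Nat.one_le_iff_ne_zero.mpr (by omega))
    · exact Real.log_le_log (by positivity) (by exact_mod_cast Nat.sub_le j 2)
  linarith


-- ### Gaussian tail bound
lemma gaussian_tail (v : ℝ≥0) (hv : v ≠ 0) (ε : ℝ) (hε : 0 < ε) :
    gaussianReal 0 v {x | ε ≤ |x|} ≤ ENNReal.ofReal (Real.sqrt 2 * Real.exp (-(ε^2) / (4*v))) := by
  have hv0 : (0:ℝ) < v := lt_of_le_of_ne v.coe_nonneg (by exact_mod_cast hv.symm)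
  set g : ℝ → ℝ≥0∞ := fun x => ENNReal.ofReal (Real.exp (x^2 / (4*v))) with hg
  have hgm : Measurable g := by
    apply ENNReal.measurable_ofReal.comp
    exact (Real.measurable_exp.comp ((measurable_id.pow_const 2).div_const _))
  set c : ℝ≥0∞ := ENNReal.ofReal (Real.exp (ε^2 / (4*v))) with hc
  have hc0 : c ≠ 0 := by
    simp [hc, ENNReal.ofReal_eq_zero, not_le, Real.exp_pos]
  have hctop : c ≠ ⊤ := ENNReal.ofReal_ne_top
  have hsub : {x : ℝ | ε ≤ |x|} ⊆ {x : ℝ | c ≤ g x} := by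
    intro x hx
    simp only [Set.mem_setOf_eq] at hx ⊢
    rw [hc, hg]
    apply ENNReal.ofReal_le_ofReal
    apply Real.exp_le_exp.mpr
    apply div_le_div_of_nonneg_right _ (by positivity)
    calc ε^2 ≤ |x|^2 := by nlinarith [abs_nonneg x]
      _ = x^2 := sq_abs x
  have hmarkov : gaussianReal 0 v {x | c ≤ g x} ≤ (∫⁻ x, g x ∂(gaussianReal 0 v)) / c :=
    meas_ge_le_lintegral_div hgm.aemeasurable hc0 hctop
  -- compute the lintegral
  have hint : (∫⁻ x, g x ∂(gaussianReal 0 v)) = ENNReal.ofReal (Real.sqrt 2) := by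
    rw [gaussianReal_of_var_ne_zero _ hv,
      lintegral_withDensity_eq_lintegral_mul _ (measurable_gaussianPDF _ _) hgm]
    have hrw : ∀ x : ℝ, (gaussianPDF 0 v * g) x
        = ENNReal.ofReal ((Real.sqrt (2*π*v))⁻¹ * Real.exp (-(1/(4*v)) * x^2)) := by
      intro x
      simp only [Pi.mul_apply, gaussianPDF, hg]
      rw [← ENNReal.ofReal_mul (gaussianPDFReal_nonneg _ _ _)]
      congr 1
      unfold gaussianPDFReal
      rw [mul_assoc, ← Real.exp_add, one_div]
      congr 2
      rw [sub_zero]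
      have hvne : (v:ℝ) ≠ 0 := ne_of_gt hv0
      field_simp
      ring
    simp_rw [hrw]
    rw [← ofReal_integral_eq_lintegral_ofReal]
    · congr 1
      rw [integral_const_mul, integral_gaussian]
      rw [show π / (1/(4*(v:ℝ))) = 2 * (2*π*v) by field_simp; ring]
      rw [Real.sqrt_mul (by norm_num : (0:ℝ) ≤ 2)]
      have h2πv : Real.sqrt (2*π*v) ≠ 0 := by
        refine ne_of_gt (Real.sqrt_pos.mpr ?_)
        have := Real.pi_pos
        positivity
      field_simp
    · exact (integrable_exp_neg_mul_sq (by positivity)).const_mul _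
    · refine ae_of_all _ (fun x => ?_)
      have := Real.pi_pos
      positivity
  calc gaussianReal 0 v {x | ε ≤ |x|} ≤ gaussianReal 0 v {x | c ≤ g x} := measure_mono hsub
    _ ≤ (∫⁻ x, g x ∂(gaussianReal 0 v)) / c := hmarkov
    _ = ENNReal.ofReal (Real.sqrt 2) / ENNReal.ofReal (Real.exp (ε^2 / (4*v))) := by
        rw [hint]
    _ = ENNReal.ofReal (Real.sqrt 2 / Real.exp (ε^2 / (4*v))) :=
        (ENNReal.ofReal_div_of_pos (Real.exp_pos _)).symm
    _ = ENNReal.ofReal (Real.sqrt 2 * Real.exp (-(ε^2) / (4*v))) := by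
        rw [div_eq_mul_inv, ← Real.exp_neg, neg_div]

-- ### Model lemmas
namespace Model

variable {d : ℕ} {α : ℝ} (M : Model d α)

/-- The joint family of random choices. -/
def famF : ∀ x : Idx d, M.Ω → IdxType d x := fun x =>
  match x with
  | .inl i => M.pa i
  | .inr (i, k) => fun ω => M.D i ω k

lemma indep' : ProbabilityTheory.iIndepFun (β := IdxType d) (m := instIdxType d) M.famF M.μ := M.indep

lemma meas_famF : ∀ x, Measurable (M.famF x) := by
  rintro (i | ⟨i, k⟩)
  · exact M.meas_pa i
  · have h : Measurable (fun ω => M.D i ω k) :=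
      ((EuclideanSpace.proj k).continuous.measurable).comp (M.meas_D i)
    exact h

lemma lvl_eq_depthAux (ω : M.Ω) : ∀ j, 1 ≤ j → M.lvl j ω = depthAux (fun r => M.pa r ω) j := by
  intro j
  induction j using Nat.strong_induction_on with
  | _ j ih =>
    intro hj
    by_cases h : 2 ≤ j
    · obtain ⟨h1, h2⟩ := M.pa_mem j h ω
      rw [M.lvl_rec j h ω, depthAux_of_ge h,
        show min (M.pa j ω) (j - 1) = M.pa j ω from min_eq_left (by omega),
        ih _ h2 h1]
    · have : j = 1 := by omega
      subst this
      rw [M.lvl_one ω, depthAux_of_le le_rfl]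

lemma meas_lvl (j : ℕ) (hj : 1 ≤ j) : Measurable (M.lvl j) := by
  have : M.lvl j = fun ω => depthAux (fun r => M.pa r ω) j :=
    funext fun ω => M.lvl_eq_depthAux ω j hj
  rw [this]
  exact measurable_depthAux_comp j M.pa M.meas_pa

lemma measurableSet_lvl_eq (j k : ℕ) (hj : 1 ≤ j) : MeasurableSet {ω | M.lvl j ω = k} :=
  M.meas_lvl j hj (measurableSet_singleton k)

/-- Independence of the parent choice of `j` from the level of `m < j`. -/
lemma meas_inter_pa_lvl (j m : ℕ) (hj : 2 ≤ j) (hm : 1 ≤ m) (hmj : m < j) (u k : ℕ) :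
    M.μ ({ω | M.pa j ω = u} ∩ {ω | M.lvl m ω = k})
      = M.μ {ω | M.pa j ω = u} * M.μ {ω | M.lvl m ω = k} := by
  classical
  set S : Finset (Idx d) := {Sum.inl j} with hS
  set T : Finset (Idx d) := (Finset.Icc 2 m).image (Sum.inl : ℕ → Idx d) with hT
  have hST : Disjoint S T := by
    rw [Finset.disjoint_left]
    intro x hxS hxT
    rw [hS, Finset.mem_singleton] at hxS
    subst hxS
    rw [hT, Finset.mem_image] at hxT
    obtain ⟨r, hr, hrj⟩ := hxT
    rw [Finset.mem_Icc] at hr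
    have : r = j := Sum.inl.inj hrj
    omega
  have base := M.indep'.indepFun_finset S T hST M.meas_famF
  haveI hcnt : ∀ i : T, Countable (IdxType d (i : Idx d)) := by
    rintro ⟨(r | p), hi⟩
    · exact (inferInstance : Countable ℕ)
    · exfalso
      rw [hT, Finset.mem_image] at hi
      obtain ⟨r, _, h⟩ := hi
      cases h
  haveI hsing : ∀ i : T, MeasurableSingletonClass (IdxType d (i : Idx d)) := by
    rintro ⟨(r | p), hi⟩
    · exact (inferInstance : MeasurableSingletonClass ℕ)
    · exfalso
      rw [hT, Finset.mem_image] at hi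
      obtain ⟨r, _, h⟩ := hi
      cases h
  set φ : (∀ i : S, IdxType d (i : Idx d)) → ℕ :=
    fun x => x ⟨Sum.inl j, by rw [hS]; exact Finset.mem_singleton_self _⟩ with hφdef
  set ψ : (∀ i : T, IdxType d (i : Idx d)) → ℕ :=
    fun x => depthAux (fun r => if h : (Sum.inl r : Idx d) ∈ T then x ⟨_, h⟩ else 0) m with hψdef
  have hφm : Measurable φ := measurable_pi_apply _
  have hψm : Measurable ψ := measurable_of_countable _
  have hcomp := base.comp hφm hψm
  have hφeq : φ ∘ (fun a (i : S) => M.famF i a) = M.pa j := rfl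
  have hψeq : ψ ∘ (fun a (i : T) => M.famF i a) = M.lvl m := by
    funext ω
    show depthAux (fun r => if h : (Sum.inl r : Idx d) ∈ T then M.famF (Sum.inl r) ω else 0) m
      = M.lvl m ω
    rw [M.lvl_eq_depthAux ω m hm]
    refine depthAux_congr m (fun r h2 hr => ?_)
    have hmemT : (Sum.inl r : Idx d) ∈ T := by
      rw [hT]; exact Finset.mem_image_of_mem _ (Finset.mem_Icc.mpr ⟨h2, hr⟩)
    exact dif_pos hmemT
  rw [hφeq, hψeq] at hcomp
  have := hcomp.measure_inter_preimage_eq_mul {u} {k}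
    (measurableSet_singleton u) (measurableSet_singleton k)
  exact this

lemma meas_lvl_one_zero (hprob : True) : M.μ {ω | M.lvl 1 ω = 0} = 1 := by
  haveI := M.prob
  have : {ω | M.lvl 1 ω = 0} = Set.univ := by
    ext ω; simp [M.lvl_one ω]
  rw [this]; exact measure_univ

lemma meas_lvl_one_succ (k : ℕ) : M.μ {ω | M.lvl 1 ω = k + 1} = 0 := by
  have : {ω | M.lvl 1 ω = k + 1} = ∅ := by
    ext ω; simp [M.lvl_one ω]
  rw [this]; exact measure_empty

lemma meas_lvl_zero (j : ℕ) (hj : 2 ≤ j) : M.μ {ω | M.lvl j ω = 0} = 0 := by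
  have : {ω | M.lvl j ω = 0} = ∅ := by
    ext ω; simp [M.lvl_rec j hj ω]
  rw [this]; exact measure_empty

lemma meas_lvl_rec (j k : ℕ) (hj : 2 ≤ j) :
    M.μ {ω | M.lvl j ω = k + 1}
      = (((j - 1 : ℕ) : ℝ≥0∞))⁻¹ * ∑ m ∈ Finset.Icc 1 (j - 1), M.μ {ω | M.lvl m ω = k} := by
  have hset : {ω | M.lvl j ω = k + 1}
      = ⋃ m ∈ Finset.Icc 1 (j - 1), ({ω | M.pa j ω = m} ∩ {ω | M.lvl m ω = k}) := by
    ext ω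
    simp only [Set.mem_setOf_eq, Set.mem_iUnion, Set.mem_inter_iff, exists_prop,
      Finset.mem_Icc]
    constructor
    · intro h
      obtain ⟨h1, h2⟩ := M.pa_mem j hj ω
      refine ⟨M.pa j ω, ⟨h1, by omega⟩, rfl, ?_⟩
      have := M.lvl_rec j hj ω
      omega
    · rintro ⟨m, ⟨hm1, hm2⟩, hpa, hlvl⟩
      have := M.lvl_rec j hj ω
      rw [hpa] at this
      omega
  rw [hset, measure_biUnion_finset]
  · rw [Finset.mul_sum]
    refine Finset.sum_congr rfl (fun m hm => ?_)
    rw [Finset.mem_Icc] at hm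
    rw [M.meas_inter_pa_lvl j m hj hm.1 (by omega) m k,
      M.pa_unif j hj m hm.1 (by omega), one_div]
  · intro m hm m' hm' hne
    simp only [Finset.coe_Icc, Set.mem_Icc] at hm hm'
    refine Set.disjoint_left.mpr ?_
    rintro ω ⟨h1, _⟩ ⟨h2, _⟩
    exact hne (h1 ▸ h2 ▸ rfl)
  · intro m hm
    rw [Finset.mem_Icc] at hm
    exact ((M.meas_pa j) (measurableSet_singleton m)).inter
      (M.measurableSet_lvl_eq m k hm.1)

/-- Probability (as a real number) that vertex `j` has level `k`. -/
noncomputable def q (j k : ℕ) : ℝ := (M.μ {ω | M.lvl j ω = k}).toReal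

lemma q_nonneg (j k : ℕ) : 0 ≤ M.q j k := ENNReal.toReal_nonneg

lemma q_one_zero : M.q 1 0 = 1 := by rw [q, M.meas_lvl_one_zero trivial]; rfl

lemma q_one_succ (k : ℕ) : M.q 1 (k + 1) = 0 := by rw [q, M.meas_lvl_one_succ]; rfl

lemma q_zero (j : ℕ) (hj : 2 ≤ j) : M.q j 0 = 0 := by rw [q, M.meas_lvl_zero j hj]; rfl

lemma q_rec (j k : ℕ) (hj : 2 ≤ j) :
    ((j - 1 : ℕ) : ℝ) * M.q j (k + 1) = ∑ m ∈ Finset.Icc 1 (j - 1), M.q m k := by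
  haveI := M.prob
  have hne : ∀ s : Set M.Ω, M.μ s ≠ ⊤ := fun s => measure_ne_top _ _
  have := M.meas_lvl_rec j k hj
  have htoReal := congrArg ENNReal.toReal this
  rw [ENNReal.toReal_mul, ENNReal.toReal_inv, ENNReal.toReal_natCast,
    ENNReal.toReal_sum (fun m _ => hne _)] at htoReal
  have hj1 : ((j - 1 : ℕ) : ℝ) ≠ 0 := by
    have h0 : 0 < j - 1 := by omega
    exact ne_of_gt (by exact_mod_cast h0)
  unfold q
  rw [htoReal, ← mul_assoc, mul_inv_cancel₀ hj1, one_mul]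

/-- Harmonic-type sum for the level recursion. -/
noncomputable def HH (j : ℕ) : ℝ := ∑ m ∈ Finset.Icc 2 (j - 1), ((m - 1 : ℕ) : ℝ)⁻¹

lemma HH_nonneg (j : ℕ) : 0 ≤ HH j :=
  Finset.sum_nonneg fun m _ => by positivity

lemma HH_succ (j : ℕ) (hj : 2 ≤ j) :
    HH (j + 1) = HH j + ((j - 1 : ℕ) : ℝ)⁻¹ := by
  unfold HH
  have h1 : j + 1 - 1 = (j - 1) + 1 := by omega
  rw [h1, Finset.sum_Icc_succ_top (by omega : 2 ≤ (j - 1) + 1)]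
  simp

lemma Icc_one_eq_insert (n : ℕ) (hn : 1 ≤ n) :
    Finset.Icc 1 n = insert 1 (Finset.Icc 2 n) := by
  ext m
  simp only [Finset.mem_Icc, Finset.mem_insert]
  omega

/-- The key distributional bound `r! (j-1) q_{j,r+1} ≤ HH_j^r`. -/
lemma q_bound : ∀ r : ℕ, ∀ j : ℕ, 2 ≤ j →
    (r.factorial : ℝ) * ((j - 1 : ℕ) : ℝ) * M.q j (r + 1) ≤ (HH j) ^ r := by
  intro r
  induction r with
  | zero =>
    intro j hj
    have := M.q_rec j 0 hj
    rw [Icc_one_eq_insert _ (by omega),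
      Finset.sum_insert (by simp), M.q_one_zero] at this
    have h0 : ∑ m ∈ Finset.Icc 2 (j - 1), M.q m 0 = 0 :=
      Finset.sum_eq_zero fun m hm => M.q_zero m (Finset.mem_Icc.mp hm).1
    rw [h0] at this
    simp only [Nat.factorial_zero, Nat.cast_one, one_mul, pow_zero]
    linarith
  | succ r ih =>
    -- first, the telescoping sum lemma
    have key : ∀ j : ℕ, 2 ≤ j →
        (((r+1).factorial : ℕ) : ℝ) * ∑ m ∈ Finset.Icc 2 (j - 1), M.q m (r + 1) ≤ HH j ^ (r + 1) := by
      intro j hj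
      induction j, hj using Nat.le_induction with
      | base =>
        have h0 : ∑ m ∈ Finset.Icc 2 (2 - 1 : ℕ), M.q m (r + 1) = 0 := by
          rw [Finset.Icc_eq_empty (by omega)]; simp
        rw [h0, mul_zero]
        exact pow_nonneg (HH_nonneg 2) _
      | succ j hj2 ihj =>
        have hsplit : ∑ m ∈ Finset.Icc 2 (j + 1 - 1), M.q m (r + 1)
            = ∑ m ∈ Finset.Icc 2 (j - 1), M.q m (r + 1) + M.q j (r + 1) := by
          have h1 : j + 1 - 1 = (j - 1) + 1 := by omega
          rw [h1, Finset.sum_Icc_succ_top (by omega : 2 ≤ (j - 1) + 1)]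
          congr 2
          omega
        have hδpos : (0:ℝ) < ((j - 1 : ℕ) : ℝ) := by
          exact_mod_cast (by omega : 0 < j - 1)
        have hq : (((r+1).factorial : ℕ) : ℝ) * M.q j (r + 1)
            ≤ ((r:ℕ) + 1) * HH j ^ r * ((j - 1 : ℕ) : ℝ)⁻¹ := by
          have h1 := ih j hj2
          have h2 : (((r+1).factorial : ℕ) : ℝ) = ((r:ℕ) + 1) * (r.factorial : ℝ) := by
            push_cast [Nat.factorial_succ]; ring
          rw [h2]
          have h3 : (r.factorial : ℝ) * M.q j (r + 1) ≤ HH j ^ r * ((j - 1 : ℕ) : ℝ)⁻¹ := by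
            have h4 := mul_le_mul_of_nonneg_right h1 (inv_nonneg.mpr hδpos.le)
            calc (r.factorial : ℝ) * M.q j (r + 1)
                = (r.factorial : ℝ) * ((j-1:ℕ):ℝ) * M.q j (r + 1) * ((j-1:ℕ):ℝ)⁻¹ := by
                  rw [show (r.factorial : ℝ) * ((j-1:ℕ):ℝ) * M.q j (r + 1) * ((j-1:ℕ):ℝ)⁻¹
                      = (r.factorial : ℝ) * M.q j (r + 1) * (((j-1:ℕ):ℝ) * ((j-1:ℕ):ℝ)⁻¹) from by
                        ring,
                    mul_inv_cancel₀ (ne_of_gt hδpos), mul_one]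
              _ ≤ HH j ^ r * ((j - 1 : ℕ) : ℝ)⁻¹ := h4
          calc ((r:ℕ) + 1) * (r.factorial : ℝ) * M.q j (r + 1)
              = ((r:ℕ) + 1) * ((r.factorial : ℝ) * M.q j (r + 1)) := by ring
            _ ≤ ((r:ℕ) + 1) * (HH j ^ r * ((j - 1 : ℕ) : ℝ)⁻¹) := by
                apply mul_le_mul_of_nonneg_left h3 (by positivity)
            _ = ((r:ℕ) + 1) * HH j ^ r * ((j - 1 : ℕ) : ℝ)⁻¹ := by ring
        calc (((r+1).factorial : ℕ) : ℝ) * ∑ m ∈ Finset.Icc 2 (j + 1 - 1), M.q m (r + 1)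
            = (((r+1).factorial : ℕ) : ℝ) * ∑ m ∈ Finset.Icc 2 (j - 1), M.q m (r + 1)
              + (((r+1).factorial : ℕ) : ℝ) * M.q j (r + 1) := by rw [hsplit]; ring
          _ ≤ HH j ^ (r + 1) + ((r:ℕ) + 1) * HH j ^ r * ((j - 1 : ℕ) : ℝ)⁻¹ :=
              add_le_add ihj hq
          _ ≤ (HH j + ((j - 1 : ℕ) : ℝ)⁻¹) ^ (r + 1) := by
              have := pow_add_le_real (HH_nonneg j) (by positivity : (0:ℝ) ≤ ((j-1:ℕ):ℝ)⁻¹) r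
              push_cast at this ⊢
              linarith
          _ = HH (j + 1) ^ (r + 1) := by rw [HH_succ j hj2]
    -- now conclude
    intro j hj
    have hrec := M.q_rec j (r + 1) hj
    rw [Icc_one_eq_insert _ (by omega), Finset.sum_insert (by simp), M.q_one_succ] at hrec
    have : (((r+1).factorial : ℕ) : ℝ) * (((j - 1 : ℕ) : ℝ) * M.q j (r + 2)) ≤ HH j ^ (r + 1) := by
      rw [hrec]
      have := key j hj
      linarith [this]
    calc (((r+1).factorial : ℕ) : ℝ) * ((j - 1 : ℕ) : ℝ) * M.q j (r + 1 + 1)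
        = (((r+1).factorial : ℕ) : ℝ) * (((j - 1 : ℕ) : ℝ) * M.q j (r + 2)) := by ring_nf
      _ ≤ HH j ^ (r + 1) := this

end Model

/-- Factorial-ratio decay. -/
lemma fact_ratio {H : ℝ} (hH : 0 ≤ H) {r₀ : ℕ} (h2 : 2 * H ≤ r₀) : ∀ s : ℕ,
    H ^ (r₀ + s) * (r₀.factorial : ℝ) * 2 ^ s ≤ H ^ r₀ * ((r₀ + s).factorial : ℝ) := by
  intro s
  induction s with
  | zero => simp
  | succ s ih =>
    have e1 : H ^ (r₀ + (s+1)) * (r₀.factorial : ℝ) * 2 ^ (s+1)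
        = (2 * H) * (H ^ (r₀ + s) * (r₀.factorial : ℝ) * 2 ^ s) := by ring
    have e2 : H ^ r₀ * (((r₀ + (s+1)).factorial : ℕ) : ℝ)
        = ((r₀ + s + 1 : ℕ) : ℝ) * (H ^ r₀ * ((r₀ + s).factorial : ℝ)) := by
      rw [show r₀ + (s+1) = (r₀ + s) + 1 from by omega, Nat.factorial_succ]
      push_cast
      ring
    rw [e1, e2]
    have hA : (2 * H) * (H ^ (r₀ + s) * (r₀.factorial : ℝ) * 2 ^ s)
        ≤ (2 * H) * (H ^ r₀ * ((r₀ + s).factorial : ℝ)) :=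
      mul_le_mul_of_nonneg_left ih (by linarith)
    have hB : (2 * H) * (H ^ r₀ * ((r₀ + s).factorial : ℝ))
        ≤ ((r₀ + s + 1 : ℕ) : ℝ) * (H ^ r₀ * ((r₀ + s).factorial : ℝ)) := by
      apply mul_le_mul_of_nonneg_right _ (by positivity)
      push_cast
      linarith
    linarith

namespace Model

variable {d : ℕ} {α : ℝ} (M : Model d α)

/-- Tail bound for the level of vertex `j`. -/
lemma lvl_tail (j r₀ : ℕ) (hj : 2 ≤ j) (hr₁ : 1 ≤ r₀) (h2H : 2 * HH j ≤ (r₀ : ℝ)) :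
    M.μ {ω | r₀ + 1 ≤ M.lvl j ω}
      ≤ ENNReal.ofReal (2 * (HH j ^ r₀ / (r₀.factorial : ℝ))) := by
  haveI := M.prob
  set c : ℝ := HH j ^ r₀ / (r₀.factorial : ℝ) with hc
  have hc0 : 0 ≤ c := div_nonneg (pow_nonneg (HH_nonneg j) _) (by positivity)
  have term_bound : ∀ s : ℕ, M.q j (r₀ + 1 + s) ≤ c * (2⁻¹) ^ s := by
    intro s
    have h1 := M.q_bound (r₀ + s) j hj
    have hδ1 : (1:ℝ) ≤ ((j - 1 : ℕ) : ℝ) := by exact_mod_cast (by omega : 1 ≤ j - 1)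
    have hfac_pos : (0:ℝ) < (((r₀ + s).factorial : ℕ) : ℝ) := by
      exact_mod_cast Nat.factorial_pos _
    have h2' : (((r₀ + s).factorial : ℕ) : ℝ) * M.q j (r₀ + s + 1) ≤ HH j ^ (r₀ + s) := by
      calc (((r₀ + s).factorial : ℕ) : ℝ) * M.q j (r₀ + s + 1)
          = (((r₀ + s).factorial : ℕ) : ℝ) * 1 * M.q j (r₀ + s + 1) := by ring
        _ ≤ (((r₀ + s).factorial : ℕ) : ℝ) * ((j - 1 : ℕ) : ℝ) * M.q j (r₀ + s + 1) := by
            apply mul_le_mul_of_nonneg_right _ (M.q_nonneg _ _)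
            apply mul_le_mul_of_nonneg_left hδ1 (by positivity)
        _ ≤ HH j ^ (r₀ + s) := h1
    have hfr := fact_ratio (HH_nonneg j) (by exact_mod_cast h2H) s
    -- q j (r₀+1+s) ≤ HH^(r₀+s) / (r₀+s)! ≤ c * 2⁻¹^s
    have hq1 : M.q j (r₀ + 1 + s) ≤ HH j ^ (r₀ + s) / (((r₀ + s).factorial : ℕ) : ℝ) := by
      rw [le_div_iff₀ hfac_pos, show r₀ + 1 + s = r₀ + s + 1 from by omega]
      linarith [h2']
    refine hq1.trans ?_
    rw [hc]
    have hfacpos2 : (0:ℝ) < (r₀.factorial : ℝ) := by exact_mod_cast Nat.factorial_pos r₀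
    have eR : HH j ^ r₀ / (r₀.factorial : ℝ) * (2⁻¹:ℝ)^s
        = HH j ^ r₀ / ((r₀.factorial : ℝ) * 2^s) := by
      rw [inv_pow]
      field_simp
    rw [eR, div_le_div_iff₀ hfac_pos (by positivity)]
    calc HH j ^ (r₀ + s) * ((r₀.factorial : ℝ) * 2^s)
        = HH j ^ (r₀ + s) * (r₀.factorial : ℝ) * 2^s := by ring
      _ ≤ HH j ^ r₀ * ((r₀ + s).factorial : ℝ) := hfr
  have hsub : {ω | r₀ + 1 ≤ M.lvl j ω} ⊆ ⋃ s : ℕ, {ω | M.lvl j ω = r₀ + 1 + s} := by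
    intro ω hω
    simp only [Set.mem_setOf_eq, Set.mem_iUnion] at hω ⊢
    exact ⟨M.lvl j ω - (r₀ + 1), by omega⟩
  calc M.μ {ω | r₀ + 1 ≤ M.lvl j ω}
      ≤ M.μ (⋃ s : ℕ, {ω | M.lvl j ω = r₀ + 1 + s}) := measure_mono hsub
    _ ≤ ∑' s : ℕ, M.μ {ω | M.lvl j ω = r₀ + 1 + s} := measure_iUnion_le _
    _ ≤ ∑' s : ℕ, ENNReal.ofReal (c * (2⁻¹) ^ s) := by
        refine ENNReal.tsum_le_tsum (fun s => ?_)
        rw [← ENNReal.ofReal_toReal (measure_ne_top M.μ _)]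
        exact ENNReal.ofReal_le_ofReal (term_bound s)
    _ = ∑' s : ℕ, ENNReal.ofReal c * (ENNReal.ofReal 2⁻¹) ^ s := by
        congr 1
        funext s
        rw [ENNReal.ofReal_mul hc0, ENNReal.ofReal_pow (by norm_num)]
    _ = ENNReal.ofReal c * (1 - ENNReal.ofReal 2⁻¹)⁻¹ := by
        rw [ENNReal.tsum_mul_left, ENNReal.tsum_geometric]
    _ = ENNReal.ofReal c * 2 := by
        congr 1
        rw [ENNReal.ofReal_inv_of_pos (by norm_num), ENNReal.ofReal_ofNat,
          ENNReal.one_sub_inv_two, inv_inv]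
    _ = ENNReal.ofReal (2 * c) := by
        rw [ENNReal.ofReal_mul (by norm_num : (0:ℝ) ≤ 2), mul_comm]
        norm_num

end Model

/-- The level cutoff. -/
noncomputable def lvlCeil (j : ℕ) : ℕ := ⌈(8:ℝ) * (1 + Real.log j)⌉₊

lemma lvlCeil_ge (j : ℕ) (hj : 2 ≤ j) : (8:ℝ) * (1 + Real.log j) ≤ lvlCeil j :=
  Nat.le_ceil _

lemma log_nonneg_of_two_le (j : ℕ) (hj : 2 ≤ j) : 0 ≤ Real.log j :=
  Real.log_nonneg (by exact_mod_cast Nat.one_le_of_lt hj)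

lemma lvlCeil_pos (j : ℕ) (hj : 2 ≤ j) : 1 ≤ lvlCeil j := by
  have h1 := lvlCeil_ge j hj
  have h2 := log_nonneg_of_two_le j hj
  have : (1:ℝ) ≤ (lvlCeil j : ℝ) := by nlinarith
  exact_mod_cast this

lemma lvlCeil_le (j : ℕ) (hj : 2 ≤ j) : (lvlCeil j : ℝ) ≤ 9 * (1 + Real.log j) := by
  have h2 := log_nonneg_of_two_le j hj
  have := Nat.ceil_lt_add_one (by positivity : (0:ℝ) ≤ (8:ℝ) * (1 + Real.log j))
  have h3 : (lvlCeil j : ℝ) < 8 * (1 + Real.log j) + 1 := this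
  nlinarith

/-- The analytic smallness estimate. -/
lemma tail_analytic (j : ℕ) (hj : 2 ≤ j) {H : ℝ} (hH0 : 0 ≤ H)
    (hHle : H ≤ 1 + Real.log j) :
    2 * (H ^ (lvlCeil j) / ((lvlCeil j).factorial : ℝ)) ≤ 2 / (j:ℝ)^2 := by
  set r₀ := lvlCeil j with hr₀
  set L : ℝ := 1 + Real.log j with hL
  have hLpos : (1:ℝ) ≤ L := by
    have := log_nonneg_of_two_le j hj
    rw [hL]; linarith
  have hr₀ge : 8 * L ≤ (r₀ : ℝ) := lvlCeil_ge j hj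
  have hr₀pos : (0:ℝ) < (r₀:ℝ) := by nlinarith
  -- Step 1 : H^r₀ / r₀! ≤ ((H/r₀) * e)^r₀
  have hfac_pos : (0:ℝ) < (r₀.factorial : ℝ) := by exact_mod_cast Nat.factorial_pos _
  have hA := pow_div_factorial_le_exp (le_of_lt hr₀pos) r₀
  have step1 : H ^ r₀ / (r₀.factorial : ℝ) ≤ (H / r₀ * Real.exp 1) ^ r₀ := by
    have e3 : (H / r₀ * Real.exp 1) ^ r₀ = (H / r₀) ^ r₀ * (Real.exp 1) ^ r₀ := mul_pow _ _ _
    have e4 : (H / r₀) ^ r₀ * ((r₀:ℝ)) ^ r₀ = H ^ r₀ := by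
      rw [div_pow, div_mul_cancel₀]
      positivity
    have e5 : (Real.exp 1) ^ r₀ = Real.exp r₀ := by
      rw [← Real.exp_nat_mul]; norm_num
    -- H^r₀ / r₀! = (H/r₀)^r₀ * (r₀^r₀ / r₀!) ≤ (H/r₀)^r₀ * exp r₀
    have e6 : H ^ r₀ / (r₀.factorial : ℝ) = (H / r₀) ^ r₀ * ((r₀:ℝ) ^ r₀ / (r₀.factorial : ℝ)) := by
      rw [← e4]; field_simp
    rw [e6, e3, e5]
    exact mul_le_mul_of_nonneg_left hA (by positivity)
  -- Step 2 : (H/r₀)*e ≤ exp(-1)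
  have hexp1 := Real.exp_one_lt_d9
  have hexp_pos := Real.exp_pos 1
  have step2 : H / r₀ * Real.exp 1 ≤ (Real.exp 1)⁻¹ := by
    have h8 : H / (r₀:ℝ) ≤ 1/8 := by
      rw [div_le_div_iff₀ hr₀pos (by norm_num)]
      nlinarith
    have h10 : (1/8 : ℝ) * Real.exp 1 * Real.exp 1 ≤ 1 := by nlinarith
    have h11 : (1/8 : ℝ) * Real.exp 1 ≤ (Real.exp 1)⁻¹ := by
      calc (1/8 : ℝ) * Real.exp 1
          = ((1/8) * Real.exp 1 * Real.exp 1) * (Real.exp 1)⁻¹ := by field_simp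
        _ ≤ 1 * (Real.exp 1)⁻¹ := mul_le_mul_of_nonneg_right h10 (inv_nonneg.mpr hexp_pos.le)
        _ = (Real.exp 1)⁻¹ := one_mul _
    calc H / r₀ * Real.exp 1 ≤ (1/8) * Real.exp 1 :=
          mul_le_mul_of_nonneg_right h8 hexp_pos.le
      _ ≤ (Real.exp 1)⁻¹ := h11
  -- Step 3 : conclude
  have step3 : (H / r₀ * Real.exp 1) ^ r₀ ≤ ((j:ℝ)^2)⁻¹ := by
    have hb0 : 0 ≤ H / r₀ * Real.exp 1 := by positivity
    have h12 : (H / r₀ * Real.exp 1) ^ r₀ ≤ ((Real.exp 1)⁻¹) ^ r₀ :=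
      pow_le_pow_left₀ hb0 step2 r₀
    have h13 : ((Real.exp 1)⁻¹) ^ r₀ = Real.exp (-(r₀:ℝ)) := by
      rw [← Real.exp_neg, ← Real.exp_nat_mul]
      congr 1
      ring
    have h14 : Real.exp (-(r₀:ℝ)) ≤ Real.exp (-(2 * Real.log j)) := by
      apply Real.exp_le_exp.mpr
      have := log_nonneg_of_two_le j hj
      rw [hL] at hr₀ge
      nlinarith
    have h15 : Real.exp (-(2 * Real.log j)) = ((j:ℝ)^2)⁻¹ := by
      rw [show -(2 * Real.log (j:ℝ)) = -Real.log ((j:ℝ)^2) by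
          rw [Real.log_pow]; push_cast; ring,
        Real.exp_neg, Real.exp_log (by positivity)]
    rw [h15] at h14
    rw [h13] at h12
    exact h12.trans h14
  have : H ^ r₀ / (r₀.factorial : ℝ) ≤ ((j:ℝ)^2)⁻¹ := step1.trans step3
  rw [div_eq_mul_inv (2:ℝ)]
  linarith

namespace Model

variable {d : ℕ} {α : ℝ} (M : Model d α)

/-- Final per-vertex bound for the bad-level event. -/
lemma lvl_bad_bound (j : ℕ) (hj : 2 ≤ j) :
    M.μ {ω | lvlCeil j + 1 ≤ M.lvl j ω} ≤ ENNReal.ofReal (2 / (j:ℝ)^2) := by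
  have hHle : HH j ≤ 1 + Real.log j := harmonic_le_log j hj
  have h2H : 2 * HH j ≤ (lvlCeil j : ℝ) := by
    have := lvlCeil_ge j hj
    have := log_nonneg_of_two_le j hj
    have := HH_nonneg j
    nlinarith
  refine (M.lvl_tail j (lvlCeil j) hj (lvlCeil_pos j hj) h2H).trans ?_
  exact ENNReal.ofReal_le_ofReal (tail_analytic j hj (HH_nonneg j) hHle)

end Model

namespace Model

variable {d : ℕ} {α : ℝ} (M : Model d α)

lemma meas_D_coord (j : ℕ) (k : Fin d) : Measurable (fun ω => M.D j ω k) :=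
  ((EuclideanSpace.proj k).continuous.measurable).comp (M.meas_D j)

/-- Tail bound for one coordinate of the displacement. -/
lemma D_coord_tail (hα : 0 < α) (j : ℕ) (hj : 2 ≤ j) (k : Fin d) :
    M.μ {ω | ((j:ℝ) ^ (-(α/2)) : ℝ) ≤ |M.D j ω k|}
      ≤ ENNReal.ofReal (Real.sqrt 2 * Real.exp (-((j:ℝ) ^ α) / 4)) := by
  have hj0 : (0:ℝ) < (j:ℝ) := by positivity
  set ε : ℝ := (j:ℝ) ^ (-(α/2)) with hε
  have hεpos : 0 < ε := Real.rpow_pos_of_pos hj0 _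
  set v : ℝ≥0 := (j : ℝ≥0) ^ (-(2 * α)) with hv
  have hvne : v ≠ 0 := by
    rw [hv]
    refine (NNReal.rpow_pos ?_).ne'
    exact_mod_cast (by omega : 0 < j)
  have hset : MeasurableSet {x : ℝ | ε ≤ |x|} :=
    measurableSet_le measurable_const measurable_abs
  have hmap : M.μ {ω | ε ≤ |M.D j ω k|}
      = (MeasureTheory.Measure.map (fun ω => M.D j ω k) M.μ) {x | ε ≤ |x|} := by
    rw [MeasureTheory.Measure.map_apply (M.meas_D_coord j k) hset]
    rfl
  rw [hmap, M.D_gauss j hj k]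
  refine (gaussian_tail v hvne ε hεpos).trans (ENNReal.ofReal_le_ofReal ?_)
  have hveq : (v : ℝ) = (j:ℝ) ^ (-(2 * α)) := by
    rw [hv, NNReal.coe_rpow]
    norm_num
  have hε2 : ε ^ 2 = (j:ℝ) ^ (-α) := by
    rw [hε, ← Real.rpow_natCast (((j:ℝ)) ^ (-(α/2))) 2, ← Real.rpow_mul hj0.le]
    norm_num
  have hvpos : (0:ℝ) < (j:ℝ) ^ (-(2 * α)) := Real.rpow_pos_of_pos hj0 _
  have hcomb : ε ^ 2 / (4 * (v:ℝ)) = (j:ℝ) ^ α / 4 := by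
    rw [hε2, hveq]
    have h1 : (j:ℝ) ^ (-α) = (j:ℝ) ^ α * (j:ℝ) ^ (-(2 * α)) := by
      rw [← Real.rpow_add hj0]
      ring_nf
    rw [h1]
    field_simp
  rw [show -ε ^ 2 / (4 * (v:ℝ)) = -(j:ℝ) ^ α / 4 from by rw [neg_div, neg_div, hcomb]]

/-- If every coordinate is small the norm is small. -/
lemma norm_le_of_coords (x : EuclideanSpace ℝ (Fin d)) (c : ℝ) (hc : 0 ≤ c)
    (h : ∀ k, |x k| ≤ c) : ‖x‖ ≤ Real.sqrt d * c := by
  rw [EuclideanSpace.norm_eq]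
  have h1 : ∑ i : Fin d, ‖x i‖ ^ 2 ≤ ∑ _i : Fin d, c ^ 2 := by
    refine Finset.sum_le_sum (fun i _ => ?_)
    rw [Real.norm_eq_abs]
    nlinarith [h i, abs_nonneg (x i)]
  have h2 : ∑ _i : Fin d, (c:ℝ) ^ 2 = (d : ℝ) * c ^ 2 := by
    rw [Finset.sum_const, Finset.card_univ, Fintype.card_fin, nsmul_eq_mul]
  calc Real.sqrt (∑ i : Fin d, ‖x i‖ ^ 2) ≤ Real.sqrt ((d:ℝ) * c ^ 2) := by
        apply Real.sqrt_le_sqrt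
        rw [← h2]
        exact h1
    _ = Real.sqrt d * c := by
        rw [Real.sqrt_mul (by positivity), Real.sqrt_sq hc]

/-- The bad event for the displacement of vertex `j`. -/
def badD (j : ℕ) : Set M.Ω := ⋃ k : Fin d, {ω | ((j:ℝ) ^ (-(α/2)) : ℝ) ≤ |M.D j ω k|}

lemma badD_bound (hα : 0 < α) (j : ℕ) (hj : 2 ≤ j) :
    M.μ (M.badD j)
      ≤ ENNReal.ofReal ((d:ℝ) * (Real.sqrt 2 * Real.exp (-((j:ℝ) ^ α) / 4))) := by
  calc M.μ (M.badD j) ≤ ∑ k : Fin d, M.μ {ω | ((j:ℝ) ^ (-(α/2)) : ℝ) ≤ |M.D j ω k|} :=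
        measure_iUnion_fintype_le _ _
    _ ≤ ∑ _k : Fin d, ENNReal.ofReal (Real.sqrt 2 * Real.exp (-((j:ℝ) ^ α) / 4)) :=
        Finset.sum_le_sum (fun k _ => M.D_coord_tail hα j hj k)
    _ = (d : ℕ) • ENNReal.ofReal (Real.sqrt 2 * Real.exp (-((j:ℝ) ^ α) / 4)) := by
        rw [Finset.sum_const, Finset.card_univ, Fintype.card_fin]
    _ = ENNReal.ofReal ((d:ℝ) * (Real.sqrt 2 * Real.exp (-((j:ℝ) ^ α) / 4))) := by
        rw [nsmul_eq_mul, ENNReal.ofReal_mul (by positivity : (0:ℝ) ≤ (d:ℝ)),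
          ENNReal.ofReal_natCast, ENNReal.ofReal_mul (by positivity : (0:ℝ) ≤ Real.sqrt 2)]

lemma not_badD {j : ℕ} {ω : M.Ω} (h : ω ∉ M.badD j) :
    ‖M.D j ω‖ ≤ Real.sqrt d * ((j:ℝ) ^ (-(α/2)) : ℝ) := by
  apply norm_le_of_coords _ _ (by positivity)
  intro k
  simp only [badD, Set.mem_iUnion, Set.mem_setOf_eq, not_exists] at h
  exact le_of_not_ge (h k)

end Model

-- ### Summability
lemma summable_inv_sq_shift : Summable (fun n : ℕ => (1:ℝ) / (((n+2:ℕ)):ℝ)^2) := by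
  have h : Summable (fun n : ℕ => (1:ℝ) / (n:ℝ)^2) :=
    summable_one_div_nat_pow.mpr (by norm_num)
  have h2 := (summable_nat_add_iff 2).mpr h
  refine h2.congr (fun n => ?_)
  push_cast
  norm_num

lemma exp_rpow_bound {α : ℝ} (hα : 0 < α) (j : ℕ) (hj : 1 ≤ j) :
    Real.exp (-((j:ℝ) ^ α) / 4)
      ≤ ((Nat.ceil (2/α)).factorial : ℝ) * 4 ^ (Nat.ceil (2/α)) / (j:ℝ)^2 := by
  set N := Nat.ceil (2/α) with hN
  have hj0 : (0:ℝ) < (j:ℝ) := by exact_mod_cast (by omega : 0 < j)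
  have hj1 : (1:ℝ) ≤ (j:ℝ) := by exact_mod_cast hj
  set x : ℝ := (j:ℝ) ^ α / 4 with hx
  have hxpos : 0 < x := by
    have := Real.rpow_pos_of_pos hj0 α
    rw [hx]; positivity
  have hfac := pow_div_factorial_le_exp hxpos.le N
  have hexp : Real.exp (-x) ≤ (N.factorial : ℝ) / x ^ N := by
    rw [le_div_iff₀ (by positivity), Real.exp_neg]
    rw [div_le_iff₀ (by positivity : (0:ℝ) < (N.factorial:ℝ))] at hfac
    calc (Real.exp x)⁻¹ * x ^ N ≤ (Real.exp x)⁻¹ * (Real.exp x * (N.factorial : ℝ)) := by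
          apply mul_le_mul_of_nonneg_left hfac (by positivity)
      _ = (N.factorial : ℝ) := by
          rw [← mul_assoc, inv_mul_cancel₀ (Real.exp_pos x).ne', one_mul]
  have hxN : (j:ℝ)^2 / 4 ^ N ≤ x ^ N := by
    rw [hx, div_pow]
    apply div_le_div_of_nonneg_right _ (by positivity)
    · have h1 : ((j:ℝ) ^ α) ^ N = (j:ℝ) ^ (α * N) := by
        rw [← Real.rpow_natCast ((j:ℝ) ^ α) N, ← Real.rpow_mul hj0.le]
      have h2 : (2:ℝ) ≤ α * N := by
        have := Nat.le_ceil (2/α)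
        rw [← hN] at this
        calc (2:ℝ) = α * (2/α) := by field_simp
          _ ≤ α * N := mul_le_mul_of_nonneg_left this hα.le
      have h3 : (j:ℝ) ^ (2:ℝ) ≤ (j:ℝ) ^ (α * N) :=
        Real.rpow_le_rpow_of_exponent_le hj1 h2
      rw [h1]
      calc (j:ℝ)^2 = (j:ℝ) ^ ((2:ℕ):ℝ) := by rw [Real.rpow_natCast]
        _ = (j:ℝ) ^ (2:ℝ) := by norm_num
        _ ≤ (j:ℝ) ^ (α * N) := h3
  have hxNpos : (0:ℝ) < (j:ℝ)^2 / 4 ^ N := by positivity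
  calc Real.exp (-((j:ℝ) ^ α) / 4) = Real.exp (-x) := by rw [hx]; congr 1; ring
    _ ≤ (N.factorial : ℝ) / x ^ N := hexp
    _ ≤ (N.factorial : ℝ) / ((j:ℝ)^2 / 4 ^ N) := by
        apply div_le_div_of_nonneg_left (by positivity) hxNpos hxN
    _ = (N.factorial : ℝ) * 4 ^ N / (j:ℝ)^2 := by
        field_simp

namespace Model

variable {d : ℕ} {α : ℝ} (M : Model d α)

/-- Full bad event at stage `n` (for vertex `j = n+2`). -/
def bad (n : ℕ) : Set M.Ω :=
  M.badD (n+2) ∪ {ω | lvlCeil (n+2) + 1 ≤ M.lvl (n+2) ω}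

lemma bad_bound (hα : 0 < α) (n : ℕ) :
    M.μ (M.bad n) ≤ ENNReal.ofReal
      ((d:ℝ) * (Real.sqrt 2 * Real.exp (-(((n+2:ℕ)):ℝ) ^ α / 4)) + 2 / (((n+2:ℕ)):ℝ)^2) := by
  calc M.μ (M.bad n) ≤ M.μ (M.badD (n+2)) + M.μ {ω | lvlCeil (n+2) + 1 ≤ M.lvl (n+2) ω} :=
        measure_union_le _ _
    _ ≤ ENNReal.ofReal ((d:ℝ) * (Real.sqrt 2 * Real.exp (-(((n+2:ℕ)):ℝ) ^ α / 4)))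
        + ENNReal.ofReal (2 / (((n+2:ℕ)):ℝ)^2) :=
        add_le_add (M.badD_bound hα (n+2) (by omega)) (M.lvl_bad_bound (n+2) (by omega))
    _ = _ := by
        rw [← ENNReal.ofReal_add (by positivity) (by positivity)]

lemma tsum_bad_ne_top (hα : 0 < α) : (∑' n : ℕ, M.μ (M.bad n)) ≠ ⊤ := by
  set C : ℝ := (d:ℝ) * Real.sqrt 2 * ((Nat.ceil (2/α)).factorial : ℝ) * 4 ^ (Nat.ceil (2/α)) + 2
    with hC
  have hf : ∀ n : ℕ, (d:ℝ) * (Real.sqrt 2 * Real.exp (-(((n+2:ℕ)):ℝ) ^ α / 4))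
      + 2 / (((n+2:ℕ)):ℝ)^2 ≤ C * ((1:ℝ) / (((n+2:ℕ)):ℝ)^2) := by
    intro n
    have h1 := exp_rpow_bound hα (n+2) (by omega)
    have hd0 : (0:ℝ) ≤ (d:ℝ) * Real.sqrt 2 := by positivity
    have h2 : (d:ℝ) * (Real.sqrt 2 * Real.exp (-(((n+2:ℕ)):ℝ) ^ α / 4))
        ≤ (d:ℝ) * Real.sqrt 2 * (((Nat.ceil (2/α)).factorial : ℝ) * 4 ^ (Nat.ceil (2/α))
            / (((n+2:ℕ)):ℝ)^2) := by
      rw [← mul_assoc]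
      exact mul_le_mul_of_nonneg_left h1 hd0
    rw [hC]
    have hpos : (0:ℝ) < (((n+2:ℕ)):ℝ)^2 := by positivity
    rw [add_mul]
    rw [show (2:ℝ) * (1 / (((n+2:ℕ)):ℝ)^2) = 2 / (((n+2:ℕ)):ℝ)^2 from by ring]
    apply add_le_add _ le_rfl
    calc (d:ℝ) * (Real.sqrt 2 * Real.exp (-(((n+2:ℕ)):ℝ) ^ α / 4))
        ≤ (d:ℝ) * Real.sqrt 2 * (((Nat.ceil (2/α)).factorial : ℝ) * 4 ^ (Nat.ceil (2/α))
            / (((n+2:ℕ)):ℝ)^2) := h2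
      _ = (d:ℝ) * Real.sqrt 2 * ((Nat.ceil (2/α)).factorial : ℝ) * 4 ^ (Nat.ceil (2/α))
            * (1 / (((n+2:ℕ)):ℝ)^2) := by ring
  have hsummable : Summable (fun n : ℕ => C * ((1:ℝ) / (((n+2:ℕ)):ℝ)^2)) :=
    summable_inv_sq_shift.mul_left C
  have hle : (∑' n : ℕ, M.μ (M.bad n))
      ≤ ∑' n : ℕ, ENNReal.ofReal (C * ((1:ℝ) / (((n+2:ℕ)):ℝ)^2)) := by
    refine ENNReal.tsum_le_tsum (fun n => ?_)
    refine (M.bad_bound hα n).trans (ENNReal.ofReal_le_ofReal (hf n))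
  have heq : (∑' n : ℕ, ENNReal.ofReal (C * ((1:ℝ) / (((n+2:ℕ)):ℝ)^2)))
      = ENNReal.ofReal (∑' n : ℕ, C * ((1:ℝ) / (((n+2:ℕ)):ℝ)^2)) := by
    rw [ENNReal.ofReal_tsum_of_nonneg (fun n => ?_) hsummable]
    have hC0 : 0 ≤ C := by
      rw [hC]; positivity
    positivity
  exact ne_top_of_le_ne_top (by rw [heq]; exact ENNReal.ofReal_ne_top) hle

end Model

-- ### Deterministic path bound
lemma det_bound (J : ℕ) (hJ : 2 ≤ J) (pa lvl : ℕ → ℕ) (Xn Dn : ℕ → ℝ) (g : ℕ → ℝ)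
    (hg : ∀ t, 0 ≤ g t) (hDn : ∀ j, 0 ≤ Dn j)
    (hpa : ∀ i, 2 ≤ i → 1 ≤ pa i ∧ pa i < i)
    (hX1 : Xn 1 = 0)
    (hXr : ∀ i, 2 ≤ i → Xn i ≤ Xn (pa i) + Dn i)
    (hlv : ∀ i, 2 ≤ i → lvl i = lvl (pa i) + 1)
    (hD : ∀ j, J ≤ j → Dn j ≤ g (lvl j)) :
    ∀ i, 1 ≤ i →
      Xn i ≤ (∑ j ∈ Finset.Icc 2 (J-1), Dn j) + ∑ t ∈ Finset.Icc 1 (lvl i), g t := by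
  -- strengthened claim with `min i (J-1)`
  have main : ∀ i, 1 ≤ i →
      Xn i ≤ (∑ j ∈ Finset.Icc 2 (min i (J-1)), Dn j) + ∑ t ∈ Finset.Icc 1 (lvl i), g t := by
    intro i
    induction i using Nat.strong_induction_on with
    | _ i ih =>
      intro hi
      by_cases h2 : 2 ≤ i
      · obtain ⟨hp1, hp2⟩ := hpa i h2
        have hXi := hXr i h2
        have hIH := ih (pa i) hp2 hp1
        have hlvi := hlv i h2
        by_cases hcase : i ≤ J - 1
        · -- small index : Dn i is swallowed by the first sum
          have hmini : min i (J-1) = i := min_eq_left hcase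
          have hminp : min (pa i) (J-1) = pa i := min_eq_left (by omega)
          have hsum1 : (∑ j ∈ Finset.Icc 2 (pa i), Dn j) + Dn i
              ≤ ∑ j ∈ Finset.Icc 2 i, Dn j := by
            have hsubset : insert i (Finset.Icc 2 (pa i)) ⊆ Finset.Icc 2 i := by
              intro m hm
              simp only [Finset.mem_insert, Finset.mem_Icc] at hm ⊢
              omega
            have hnotmem : i ∉ Finset.Icc 2 (pa i) := by
              simp only [Finset.mem_Icc]; omega
            calc (∑ j ∈ Finset.Icc 2 (pa i), Dn j) + Dn i
                = ∑ j ∈ insert i (Finset.Icc 2 (pa i)), Dn j := by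
                  rw [Finset.sum_insert hnotmem]; ring
              _ ≤ ∑ j ∈ Finset.Icc 2 i, Dn j :=
                  Finset.sum_le_sum_of_subset_of_nonneg hsubset (fun m _ _ => hDn m)
          have hsum2 : ∑ t ∈ Finset.Icc 1 (lvl (pa i)), g t
              ≤ ∑ t ∈ Finset.Icc 1 (lvl i), g t := by
            apply Finset.sum_le_sum_of_subset_of_nonneg _ (fun m _ _ => hg m)
            apply Finset.Icc_subset_Icc le_rfl
            omega
          rw [hmini]
          rw [hminp] at hIH
          calc Xn i ≤ Xn (pa i) + Dn i := hXi
            _ ≤ ((∑ j ∈ Finset.Icc 2 (pa i), Dn j) + ∑ t ∈ Finset.Icc 1 (lvl (pa i)), g t)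
                + Dn i := by linarith
            _ = ((∑ j ∈ Finset.Icc 2 (pa i), Dn j) + Dn i)
                + ∑ t ∈ Finset.Icc 1 (lvl (pa i)), g t := by ring
            _ ≤ (∑ j ∈ Finset.Icc 2 i, Dn j) + ∑ t ∈ Finset.Icc 1 (lvl i), g t := by
                have := hsum1
                have := hsum2
                linarith
        · -- large index : Dn i ≤ g (lvl i)
          have hJi : J ≤ i := by omega
          have hDi := hD i hJi
          have hsum1 : (∑ j ∈ Finset.Icc 2 (min (pa i) (J-1)), Dn j)
              ≤ ∑ j ∈ Finset.Icc 2 (min i (J-1)), Dn j := by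
            apply Finset.sum_le_sum_of_subset_of_nonneg _ (fun m _ _ => hDn m)
            apply Finset.Icc_subset_Icc le_rfl
            omega
          have hsum2 : (∑ t ∈ Finset.Icc 1 (lvl (pa i)), g t) + g (lvl i)
              = ∑ t ∈ Finset.Icc 1 (lvl i), g t := by
            rw [hlvi, Finset.sum_Icc_succ_top (by omega : 1 ≤ lvl (pa i) + 1)]
          calc Xn i ≤ Xn (pa i) + Dn i := hXi
            _ ≤ ((∑ j ∈ Finset.Icc 2 (min (pa i) (J-1)), Dn j)
                + ∑ t ∈ Finset.Icc 1 (lvl (pa i)), g t) + g (lvl i) := by linarith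
            _ ≤ (∑ j ∈ Finset.Icc 2 (min i (J-1)), Dn j)
                + ((∑ t ∈ Finset.Icc 1 (lvl (pa i)), g t) + g (lvl i)) := by linarith
            _ = (∑ j ∈ Finset.Icc 2 (min i (J-1)), Dn j)
                + ∑ t ∈ Finset.Icc 1 (lvl i), g t := by rw [hsum2]
      · have h1 : i = 1 := by omega
        subst h1
        rw [hX1]
        have : 0 ≤ ∑ j ∈ Finset.Icc 2 (min 1 (J-1)), Dn j :=
          Finset.sum_nonneg (fun m _ => hDn m)
        have : 0 ≤ ∑ t ∈ Finset.Icc 1 (lvl 1), g t :=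
          Finset.sum_nonneg (fun m _ => hg m)
        linarith [Finset.sum_nonneg (fun m (_ : m ∈ Finset.Icc 2 (min 1 (J-1))) => hDn m)]
  intro i hi
  refine (main i hi).trans ?_
  apply add_le_add _ le_rfl
  apply Finset.sum_le_sum_of_subset_of_nonneg _ (fun m _ _ => hDn m)
  apply Finset.Icc_subset_Icc le_rfl
  omega

/-- For every `d ≥ 2` and `α > 0`, the infinite cluster `𝒳_∞` is almost surely a
bounded subset of `ℝ^d`, and hence its convex hull is almost surely bounded. -/
theorem cluster_bounded_as (d : ℕ) (hd : 2 ≤ d) (α : ℝ) (hα : 0 < α) (M : Model d α) :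
    ∀ᵐ ω ∂M.μ,
      IsBounded {x : EuclideanSpace ℝ (Fin d) | ∃ i : ℕ, 1 ≤ i ∧ x = M.X i ω} ∧
      IsBounded (convexHull ℝ {x : EuclideanSpace ℝ (Fin d) | ∃ i : ℕ, 1 ≤ i ∧ x = M.X i ω}) := by
  have hBC := MeasureTheory.ae_eventually_notMem (μ := M.μ) (s := M.bad) (M.tsum_bad_ne_top hα)
  filter_upwards [hBC] with ω hω
  obtain ⟨N, hN⟩ := Filter.eventually_atTop.mp hω
  set J : ℕ := N + 2 with hJdef
  have hgood : ∀ j, J ≤ j → ω ∉ M.bad (j - 2) := fun j hj => hN (j - 2) (by omega)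
  set r : ℝ := Real.exp (-(α/18)) with hr
  have hr0 : 0 ≤ r := (Real.exp_pos _).le
  have hr1 : r < 1 := by
    rw [hr, Real.exp_lt_one_iff]
    linarith
  set g : ℕ → ℝ := fun t => Real.sqrt d * Real.exp (α/2) * r ^ t with hg
  have hg0 : ∀ t, 0 ≤ g t := fun t => by rw [hg]; positivity
  have hGsum : Summable g :=
    (summable_geometric_of_lt_one hr0 hr1).mul_left (Real.sqrt d * Real.exp (α/2))
  set G : ℝ := ∑' t, g t with hG
  have hsum_le : ∀ L : ℕ, ∑ t ∈ Finset.Icc 1 L, g t ≤ G :=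
    fun L => Summable.sum_le_tsum _ (fun t _ => hg0 t) hGsum
  -- the key displacement bound for j ≥ J
  have hDbound : ∀ j, J ≤ j → ‖M.D j ω‖ ≤ g (M.lvl j ω) := by
    intro j hj
    have hj2 : 2 ≤ j := by omega
    have hj0 : (0:ℝ) < (j:ℝ) := by positivity
    have hb' : ω ∉ M.badD j ∪ {ω' | lvlCeil j + 1 ≤ M.lvl j ω'} := by
      have h := hgood j hj
      unfold Model.bad at h
      rwa [show j - 2 + 2 = j from by omega] at h
    rw [Set.mem_union, not_or] at hb'
    obtain ⟨hbD, hbL⟩ := hb'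
    have hlvl_le_ceil : M.lvl j ω ≤ lvlCeil j := by
      simp only [Set.mem_setOf_eq, not_le] at hbL
      omega
    have h1 : ‖M.D j ω‖ ≤ Real.sqrt d * (j:ℝ) ^ (-(α/2)) := M.not_badD hbD
    set t : ℕ := M.lvl j ω with ht
    have hlvl_le : (t : ℝ) ≤ 9 * (1 + Real.log j) := by
      calc (t : ℝ) ≤ (lvlCeil j : ℝ) := by exact_mod_cast hlvl_le_ceil
        _ ≤ 9 * (1 + Real.log j) := lvlCeil_le j hj2
    have h2 : (j:ℝ) ^ (-(α/2)) ≤ Real.exp (α/2) * r ^ t := by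
      have e1 : (j:ℝ) ^ (-(α/2)) = Real.exp (Real.log j * (-(α/2))) :=
        Real.rpow_def_of_pos hj0 _
      have e2 : r ^ t = Real.exp ((t:ℝ) * (-(α/18))) := by
        rw [hr, Real.exp_nat_mul]
      have e3 : Real.exp (α/2) * r ^ t = Real.exp (α/2 + (t:ℝ) * (-(α/18))) := by
        rw [e2, ← Real.exp_add]
      rw [e1, e3]
      apply Real.exp_le_exp.mpr
      have hlog := log_nonneg_of_two_le j hj2
      nlinarith
    calc ‖M.D j ω‖ ≤ Real.sqrt d * (j:ℝ) ^ (-(α/2)) := h1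
      _ ≤ Real.sqrt d * (Real.exp (α/2) * r ^ t) :=
          mul_le_mul_of_nonneg_left h2 (Real.sqrt_nonneg _)
      _ = g t := by rw [hg]; ring
  -- uniform bound on ‖X i ω‖
  set C : ℝ := (∑ j ∈ Finset.Icc 2 (J-1), ‖M.D j ω‖) + G with hC
  have hXb : ∀ i, 1 ≤ i → ‖M.X i ω‖ ≤ C := by
    intro i hi
    have hdet := det_bound J (by omega) (fun n => M.pa n ω) (fun n => M.lvl n ω)
      (fun n => ‖M.X n ω‖) (fun n => ‖M.D n ω‖) g hg0 (fun j => norm_nonneg _)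
      (fun i h2 => M.pa_mem i h2 ω)
      (by show ‖M.X 1 ω‖ = 0; rw [M.X_one ω]; simp)
      (fun i h2 => by
        show ‖M.X i ω‖ ≤ ‖M.X (M.pa i ω) ω‖ + ‖M.D i ω‖
        rw [M.X_rec i h2 ω]; exact norm_add_le _ _)
      (fun i h2 => M.lvl_rec i h2 ω)
      hDbound i hi
    rw [hC]
    have := hsum_le (M.lvl i ω)
    linarith
  have hbdd : IsBounded {x : EuclideanSpace ℝ (Fin d) | ∃ i : ℕ, 1 ≤ i ∧ x = M.X i ω} := by
    rw [isBounded_iff_forall_norm_le]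
    exact ⟨C, by rintro x ⟨i, hi, rfl⟩; exact hXb i hi⟩
  exact ⟨hbdd, isBounded_convexHull.mpr hbdd⟩
end

section
/- In a random recursive tree on vertex set {1,…,m}, for every vertex i ≤ m and every positive integer t ≤ m, the level λ_m(i) of vertex i satisfies P(λ_m(i) > t) ≤ (1/t!) (∑_{j=1}^m 1/j)^t ≤ (e(1 + log m)/t)^t. -/
open scoped ENNReal NNReal

/-- A random recursive tree on vertex set `{1, …, m}`: each vertex `i ∈ {2, …, m}`
attaches to a parent `pa i` chosen uniformly at random from `{1, …, i-1}`,
independently over `i`.  `lvl i` is the level of vertex `i`, i.e. the number of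
edges on the path from `i` to the root `1`. -/
structure RRT (m : ℕ) where
  Ω : Type
  [mΩ : MeasurableSpace Ω]
  μ : MeasureTheory.Measure Ω
  prob : MeasureTheory.IsProbabilityMeasure μ
  pa : ℕ → Ω → ℕ
  meas_pa : ∀ i, Measurable (pa i)
  pa_mem : ∀ i, 2 ≤ i → i ≤ m → ∀ ω, 1 ≤ pa i ω ∧ pa i ω < i
  pa_unif : ∀ i, 2 ≤ i → i ≤ m → ∀ j, 1 ≤ j → j < i →
    μ {ω | pa i ω = j} = (1 : ℝ≥0∞) / (i - 1 : ℕ)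
  indep : ProbabilityTheory.iIndepFun (m := fun _ : ℕ => (inferInstance : MeasurableSpace ℕ)) pa μ
  lvl : ℕ → Ω → ℕ
  lvl_one : ∀ ω, lvl 1 ω = 0
  lvl_rec : ∀ i, 2 ≤ i → i ≤ m → ∀ ω, lvl i ω = lvl (pa i ω) ω + 1

open MeasureTheory ProbabilityTheory Real

lemma keyComb {t : ℕ} (s : Finset ℕ) (x : ℕ → ℝ≥0∞) (F : Finset (Fin t → ℕ))
    (hF : ∀ f ∈ F, StrictMono f ∧ ∀ k, f k ∈ s) :
    (t.factorial : ℝ≥0∞) * ∑ f ∈ F, ∏ k, x (f k) ≤ (∑ j ∈ s, x j) ^ t := by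
  classical
  have h1 : ∀ f ∈ F, (t.factorial : ℝ≥0∞) * ∏ k, x (f k)
      = ∑ _π : Equiv.Perm (Fin t), ∏ k, x (f k) := by
    intro f _
    rw [Finset.sum_const, Finset.card_univ, Fintype.card_perm, Fintype.card_fin, nsmul_eq_mul]
  calc (t.factorial : ℝ≥0∞) * ∑ f ∈ F, ∏ k, x (f k)
      = ∑ f ∈ F, ∑ σ : Equiv.Perm (Fin t), ∏ k, x (f (σ k)) := by
        rw [Finset.mul_sum]
        refine Finset.sum_congr rfl fun f hf => ?_
        rw [h1 f hf]
        exact Finset.sum_congr rfl fun σ _ => (Equiv.prod_comp σ (fun k => x (f k))).symm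
    _ = ∑ p ∈ F ×ˢ (Finset.univ : Finset (Equiv.Perm (Fin t))), ∏ k, x (p.1 (p.2 k)) := by
        rw [Finset.sum_product]
    _ = ∑ g ∈ (F ×ˢ (Finset.univ : Finset (Equiv.Perm (Fin t)))).image
          (fun p => p.1 ∘ (p.2 : Fin t → Fin t)), ∏ k, x (g k) := by
        rw [Finset.sum_image ?_]
        · rfl
        intro p hp q hq h
        have hp1 := (hF p.1 (Finset.mem_product.1 hp).1).1
        have hq1 := (hF q.1 (Finset.mem_product.1 hq).1).1
        have hr : Set.range p.1 = Set.range q.1 := by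
          rw [← p.2.surjective.range_comp p.1, ← q.2.surjective.range_comp q.1]; exact congrArg Set.range h
        haveI hwf : WellFoundedLT (Fin t) := inferInstance
        have h1 : p.1 = q.1 := (@StrictMono.range_inj (Fin t) ℕ _ _ hwf _ _ hp1 hq1).1 hr
        have h2 : p.2 = q.2 := by
          apply Equiv.ext; intro k
          apply hq1.injective
          have := congrFun h k
          simpa [h1] using this
        exact Prod.ext h1 h2
    _ ≤ ∑ g ∈ Fintype.piFinset (fun _ : Fin t => s), ∏ k, x (g k) := by
        refine Finset.sum_le_sum_of_subset ?_
        intro g hg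
        obtain ⟨p, hp, rfl⟩ := Finset.mem_image.1 hg
        exact Fintype.mem_piFinset.2 fun k => (hF p.1 (Finset.mem_product.1 hp).1).2 (p.2 k)
    _ = (∑ j ∈ s, x j) ^ t := by
        rw [← Finset.prod_univ_sum]
        simp [Finset.prod_const]

lemma factBound (t : ℕ) (ht : 1 ≤ t) :
    (1 : ℝ) / t.factorial ≤ (Real.exp 1 / t) ^ t := by
  have h1 : ((t : ℝ)) ^ t / t.factorial ≤ Real.exp t :=
    Real.pow_div_factorial_le_exp (x := (t:ℝ)) (by positivity) t
  have ht' : (0 : ℝ) < t := by exact_mod_cast ht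
  have hf : (0 : ℝ) < t.factorial := by exact_mod_cast t.factorial_pos
  rw [div_pow, Real.exp_one_pow, div_le_div_iff₀ hf (by positivity), one_mul]
  calc ((t : ℝ)) ^ t ≤ Real.exp t * t.factorial := (div_le_iff₀ hf).1 h1
    _ = Real.exp t * t.factorial := rfl

/-- In a random recursive tree on `{1, …, m}`, for every vertex `i ≤ m` and every
positive integer `t ≤ m`, the level of `i` satisfies
`P(λ_m(i) > t) ≤ (1/t!) (∑_{j=1}^m 1/j)^t ≤ (e (1 + log m) / t)^t`. -/
theorem rrt_level_tail (m : ℕ) (R : RRT m) (i t : ℕ)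
    (hi1 : 1 ≤ i) (him : i ≤ m) (ht1 : 1 ≤ t) (htm : t ≤ m) :
    R.μ {ω | t < R.lvl i ω} ≤
        ENNReal.ofReal
          ((1 / (Nat.factorial t : ℝ)) * (∑ j ∈ Finset.Icc 1 m, (1 : ℝ) / j) ^ t) ∧
      (1 / (Nat.factorial t : ℝ)) * (∑ j ∈ Finset.Icc 1 m, (1 : ℝ) / j) ^ t ≤
        (Real.exp 1 * (1 + Real.log m) / t) ^ t := by
  classical
  have hm1 : 1 ≤ m := le_trans ht1 htm
  set H : ℝ := ∑ j ∈ Finset.Icc 1 m, (1 : ℝ) / j with hHdef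
  have hH0 : 0 ≤ H := Finset.sum_nonneg fun j _ => by positivity
  have hHharm : H = (harmonic m : ℝ) := by
    rw [harmonic_eq_sum_Icc]
    push_cast
    simp [hHdef, one_div]
  have hHlog : H ≤ 1 + Real.log m := hHharm ▸ harmonic_le_one_add_log m
  constructor
  · -- probabilistic bound
    set x : ℕ → ℝ≥0∞ := fun j => ((j : ℝ≥0∞))⁻¹ with hxdef
    have hconv : ENNReal.ofReal ((1 / (Nat.factorial t : ℝ)) * H ^ t)
        = ((t.factorial : ℝ≥0∞))⁻¹ * (∑ j ∈ Finset.Icc 1 m, x j) ^ t := by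
      rw [ENNReal.ofReal_mul (by positivity), ENNReal.ofReal_pow hH0]
      congr 1
      · rw [one_div, ENNReal.ofReal_inv_of_pos (by exact_mod_cast t.factorial_pos),
          ENNReal.ofReal_natCast]
      · congr 1
        rw [hHdef, ENNReal.ofReal_sum_of_nonneg (fun j _ => by positivity)]
        refine Finset.sum_congr rfl fun j hj => ?_
        have hj1 : (0 : ℝ) < j := by
          have := (Finset.mem_Icc.1 hj).1; exact_mod_cast Nat.lt_of_lt_of_le Nat.zero_lt_one this
        simp only [hxdef]
        rw [one_div, ENNReal.ofReal_inv_of_pos hj1, ENNReal.ofReal_natCast]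
    rw [hconv]
    -- chain setup
    set C : Finset (Fin (t+1) → ℕ) :=
      (Fintype.piFinset fun _ => Finset.Icc 1 m).filter
        (fun c => StrictMono c ∧ c (Fin.last t) = i) with hCdef
    have hsub : {ω | t < R.lvl i ω} ⊆
        ⋃ c ∈ C, ⋂ k : Fin t, {ω | R.pa (c k.succ) ω = c k.castSucc} := by
      intro ω hω
      simp only [Set.mem_setOf_eq] at hω
      let jseq : ℕ → ℕ := fun k => Nat.rec i (fun _ p => R.pa p ω) k
      have hjs : ∀ k, jseq (k+1) = R.pa (jseq k) ω := fun k => rfl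
      have hj0 : jseq 0 = i := rfl
      have key : ∀ k, k ≤ t → 2 ≤ jseq k ∧ jseq k ≤ m ∧ t - k < R.lvl (jseq k) ω := by
        intro k
        induction k with
        | zero =>
          intro _
          refine ⟨?_, by rwa [hj0], by rw [hj0]; simpa using hω⟩
          rw [hj0]
          rcases Nat.lt_or_ge i 2 with h | h
          · have hieq : i = 1 := by omega
            have := R.lvl_one ω
            rw [hieq] at hω
            omega
          · exact h
        | succ k ih =>
          intro hk
          obtain ⟨h2, hm2, hl⟩ := ih (Nat.le_of_succ_le hk)
          have hpa := R.pa_mem (jseq k) h2 hm2 ω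
          have hrec := R.lvl_rec (jseq k) h2 hm2 ω
          rw [← hjs k] at hpa hrec
          have hlvl : t - (k+1) < R.lvl (jseq (k+1)) ω := by omega
          have h2' : 2 ≤ jseq (k+1) := by
            rcases Nat.lt_or_ge (jseq (k+1)) 2 with h | h
            · have hj1 : jseq (k+1) = 1 := by omega
              rw [hj1] at hlvl
              have := R.lvl_one ω
              omega
            · exact h
          exact ⟨h2', by omega, hlvl⟩
      have anti : ∀ b, b ≤ t → ∀ a, a < b → jseq b < jseq a := by
        intro b
        induction b with
        | zero => intro _ a ha; omega
        | succ b ih =>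
          intro hb a ha
          obtain ⟨h2, hm2, _⟩ := key b (by omega)
          have hpa := R.pa_mem (jseq b) h2 hm2 ω
          rw [← hjs b] at hpa
          rcases Nat.lt_or_ge a b with h | h
          · exact hpa.2.trans (ih (by omega) a h)
          · have : a = b := by omega
            rw [this]; exact hpa.2
      have hcC : (fun k : Fin (t+1) => jseq (t - (k : ℕ))) ∈ C := by
        rw [hCdef, Finset.mem_filter]
        refine ⟨Fintype.mem_piFinset.2 fun k => ?_, ?_, ?_⟩
        · show jseq (t - (k : ℕ)) ∈ Finset.Icc 1 m
          obtain ⟨h2, hm2, _⟩ := key (t - (k : ℕ)) (by omega)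
          exact Finset.mem_Icc.2 ⟨by omega, hm2⟩
        · intro k l hkl
          show jseq (t - (k : ℕ)) < jseq (t - (l : ℕ))
          have hkl' : (k : ℕ) < (l : ℕ) := hkl
          have hl : (l : ℕ) ≤ t := by omega
          exact anti (t - (k : ℕ)) (by omega) (t - (l : ℕ)) (by omega)
        · show jseq (t - ((Fin.last t : Fin (t+1)) : ℕ)) = i
          rw [Fin.val_last, Nat.sub_self, hj0]
      refine Set.mem_biUnion hcC ?_
      simp only [Set.mem_iInter, Set.mem_setOf_eq]
      intro k
      have hk : (k : ℕ) < t := k.isLt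
      show R.pa (jseq (t - ((k.succ : Fin (t+1)) : ℕ))) ω
          = jseq (t - ((k.castSucc : Fin (t+1)) : ℕ))
      rw [Fin.val_succ, Fin.coe_castSucc]
      have e3 : t - (k : ℕ) = (t - ((k : ℕ) + 1)) + 1 := by omega
      rw [e3, hjs]
    have hmeasA : ∀ c ∈ C,
        R.μ (⋂ k : Fin t, {ω | R.pa (c k.succ) ω = c k.castSucc})
          = ∏ k : Fin t, (((c k.succ - 1 : ℕ) : ℝ≥0∞))⁻¹ := by
      intro c hcC
      have hmem : ∀ k, 1 ≤ c k ∧ c k ≤ m := fun k =>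
        Finset.mem_Icc.1 (Fintype.mem_piFinset.1 (Finset.mem_filter.1 hcC).1 k)
      have hmono : StrictMono c := (Finset.mem_filter.1 hcC).2.1
      have hinj : Function.Injective fun k : Fin t => c k.succ := by
        intro a b hab
        exact Fin.succ_injective t (hmono.injective hab)
      set sets : ℕ → Set ℕ := fun n =>
        if h : ∃ k : Fin t, c k.succ = n then {c (h.choose).castSucc} else Set.univ with hsetsdef
      have hsetsc : ∀ k : Fin t, sets (c k.succ) = {c k.castSucc} := by
        intro k
        have hex : ∃ k' : Fin t, c k'.succ = c k.succ := ⟨k, rfl⟩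
        simp only [hsetsdef]
        rw [dif_pos hex]
        have : hex.choose = k := hinj hex.choose_spec
        rw [this]
      have hAeq : (⋂ k : Fin t, {ω | R.pa (c k.succ) ω = c k.castSucc})
          = ⋂ n ∈ Finset.image (fun k : Fin t => c k.succ) Finset.univ,
              R.pa n ⁻¹' sets n := by
        ext ω
        simp only [Set.mem_iInter, Set.mem_setOf_eq, Finset.mem_image, Finset.mem_univ,
          true_and, Set.mem_preimage]
        constructor
        · rintro h n ⟨k, rfl⟩
          rw [hsetsc k]; exact h k
        · intro h k
          have := h (c k.succ) ⟨k, rfl⟩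
          rwa [hsetsc k, Set.mem_singleton_iff] at this
      have hsetsmeas : ∀ n, MeasurableSet (sets n) := by
        intro n
        simp only [hsetsdef]
        split_ifs
        · exact measurableSet_singleton _
        · exact MeasurableSet.univ
      rw [hAeq, R.indep.measure_inter_preimage_eq_mul _ (fun n _ => hsetsmeas n)]
      rw [Finset.prod_image (fun a _ b _ h => hinj h)]
      refine Finset.prod_congr rfl fun k _ => ?_
      have hlt : c k.castSucc < c k.succ := hmono (Fin.castSucc_lt_succ : k.castSucc < k.succ)
      have h2 : 2 ≤ c k.succ := by
        have := (hmem k.castSucc).1; omega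
      have hu := R.pa_unif (c k.succ) h2 (hmem k.succ).2 (c k.castSucc)
        (hmem k.castSucc).1 hlt
      rw [hsetsc k]
      rw [one_div] at hu
      exact hu
    calc R.μ {ω | t < R.lvl i ω}
        ≤ R.μ (⋃ c ∈ C, ⋂ k : Fin t, {ω | R.pa (c k.succ) ω = c k.castSucc}) :=
          measure_mono hsub
      _ ≤ ∑ c ∈ C, R.μ (⋂ k : Fin t, {ω | R.pa (c k.succ) ω = c k.castSucc}) :=
          measure_biUnion_finset_le C _
      _ = ∑ c ∈ C, ∏ k : Fin t, (((c k.succ - 1 : ℕ) : ℝ≥0∞))⁻¹ :=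
          Finset.sum_congr rfl hmeasA
      _ ≤ ∑ c ∈ C, ∏ k : Fin t, x (c k.castSucc) := by
          refine Finset.sum_le_sum fun c hcC => Finset.prod_le_prod' fun k _ => ?_
          have hmono : StrictMono c := (Finset.mem_filter.1 hcC).2.1
          have hlt : c k.castSucc < c k.succ := hmono (Fin.castSucc_lt_succ : k.castSucc < k.succ)
          simp only [hxdef]
          exact ENNReal.inv_le_inv.2 (Nat.cast_le.2 (by omega))
      _ = ∑ e ∈ C.image (fun c => c ∘ Fin.castSucc), ∏ k : Fin t, x (e k) := by
          rw [Finset.sum_image ?_]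
          · rfl
          intro c1 h1 c2 h2 h
          have hl1 := (Finset.mem_filter.1 h1).2.2
          have hl2 := (Finset.mem_filter.1 h2).2.2
          funext k
          induction k using Fin.lastCases with
          | last => rw [hl1, hl2]
          | cast j => exact congrFun h j
      _ ≤ ((t.factorial : ℝ≥0∞))⁻¹ * (∑ j ∈ Finset.Icc 1 m, x j) ^ t := by
          have hkc := keyComb (Finset.Icc 1 m) x (C.image fun c => c ∘ Fin.castSucc) ?_
          · calc ∑ e ∈ C.image (fun c => c ∘ Fin.castSucc), ∏ k : Fin t, x (e k)
                = ((t.factorial : ℝ≥0∞))⁻¹ *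
                    ((t.factorial : ℝ≥0∞) * ∑ e ∈ C.image (fun c => c ∘ Fin.castSucc),
                      ∏ k : Fin t, x (e k)) := by
                  rw [← mul_assoc, ENNReal.inv_mul_cancel
                    (by exact_mod_cast t.factorial_ne_zero) (ENNReal.natCast_ne_top _), one_mul]
              _ ≤ _ := mul_le_mul_right hkc _
          · intro f hf
            obtain ⟨c, hcC, rfl⟩ := Finset.mem_image.1 hf
            have hmono : StrictMono c := (Finset.mem_filter.1 hcC).2.1
            refine ⟨hmono.comp Fin.strictMono_castSucc, fun k => ?_⟩
            exact Fintype.mem_piFinset.1 (Finset.mem_filter.1 hcC).1 k.castSucc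
  · -- analytic bound
    have hb := factBound t ht1
    have h1 : (1 / (Nat.factorial t : ℝ)) * H ^ t
        ≤ (Real.exp 1 / t) ^ t * (1 + Real.log m) ^ t := by
      refine mul_le_mul hb (pow_le_pow_left₀ hH0 hHlog t) (by positivity) (by positivity)
    calc (1 / (Nat.factorial t : ℝ)) * H ^ t
        ≤ (Real.exp 1 / t) ^ t * (1 + Real.log m) ^ t := h1
      _ = (Real.exp 1 * (1 + Real.log m) / t) ^ t := by
          rw [← mul_pow]
          congr 1
          ring
end
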